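/- (Bound on the logistic-regression bounce intensity, Appendix B.1 of the paper.) Let ι ∈ ℝ^d with ι_k ≥ 0 for all k, let y ∈ {0,1}, and define U(x) = log(1 + exp⟨ι, x⟩) - y⟨ι, x⟩. Then for all x, v ∈ ℝ^d, max(0, ⟨∇U(x), v⟩) ≤ Σ_{k=1}^d 1[ v_k (-1)^y ≥ 0 ] ι_k |v_k|. In particular the bound is independent of x, so it holds uniformly along any line x + t v. -/

import Mathlib

open scoped RealInnerProductSpace

/-- Appendix B.1: bound on the logistic-regression bounce intensity.
For `U(x) = log(1 + exp⟨ι,x⟩) - y⟨ι,x⟩` with nonnegative covariates `ι` and label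
`y ∈ {0,1}`: `max(0, ⟨∇U(x), v⟩) ≤ ∑_k 1[v_k (-1)^y ≥ 0] ι_k |v_k|` for all `x, v`. -/
theorem logistic_bounce_intensity_bound {d : ℕ}
    (ι : EuclideanSpace ℝ (Fin d)) (hι : ∀ k, 0 ≤ ι k)
    (y : ℕ) (hy : y = 0 ∨ y = 1)
    (U : EuclideanSpace ℝ (Fin d) → ℝ)
    (hU : ∀ x, U x = Real.log (1 + Real.exp ⟪ι, x⟫) - (y : ℝ) * ⟪ι, x⟫) :
    ∀ x v : EuclideanSpace ℝ (Fin d),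
      max 0 ⟪gradient U x, v⟫
        ≤ ∑ k, (if 0 ≤ v k * (-1 : ℝ) ^ y then ι k * |v k| else 0) := by
  intro x v
  set s : ℝ := ⟪ι, x⟫ with hs
  set c : ℝ := Real.exp s / (1 + Real.exp s) - (y : ℝ) with hc
  have hpos : (0 : ℝ) < 1 + Real.exp s := by positivity
  -- gradient computation
  have hL : HasFDerivAt (fun z : EuclideanSpace ℝ (Fin d) => ⟪ι, z⟫)
      (innerSL ℝ ι) x := (innerSL ℝ ι).hasFDerivAt
  have h1 : HasDerivAt (fun t : ℝ => Real.log (1 + Real.exp t) - (y : ℝ) * t) c s := by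
    have hlog : HasDerivAt (fun t : ℝ => Real.log (1 + Real.exp t))
        (Real.exp s / (1 + Real.exp s)) s :=
      ((Real.hasDerivAt_exp s).const_add 1).log hpos.ne'
    have h2 := hlog.sub ((hasDerivAt_id s).const_mul (y : ℝ))
    rw [mul_one] at h2
    exact h2
  have hcomp : HasFDerivAt U (c • innerSL ℝ ι) x := by
    have := h1.comp_hasFDerivAt x hL
    have hfun : U = (fun t : ℝ => Real.log (1 + Real.exp t) - (y : ℝ) * t) ∘
        (fun z : EuclideanSpace ℝ (Fin d) => ⟪ι, z⟫) := by
      funext z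
      simp [hU z, Function.comp]
    rw [hfun]; exact this
  have hgrad : gradient U x = c • ι := by
    apply HasGradientAt.gradient
    rw [hasGradientAt_iff_hasFDerivAt]
    refine hcomp.congr_fderiv ?_
    ext w
    simp [InnerProductSpace.toDual_apply_apply, real_inner_smul_left]
  have hinner : ⟪gradient U x, v⟫ = c * ∑ k, ι k * v k := by
    rw [hgrad, real_inner_smul_left]
    simp [PiLp.inner_apply, RCLike.inner_apply]
    left; exact Finset.sum_congr rfl (fun k _ => mul_comm _ _)
  -- bounds on c
  have hexp : 0 < Real.exp s := Real.exp_pos s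
  -- RHS nonneg
  have hRHSnn : (0 : ℝ) ≤ ∑ k, (if 0 ≤ v k * (-1 : ℝ) ^ y then ι k * |v k| else 0) := by
    apply Finset.sum_nonneg
    intro k _
    split
    · exact mul_nonneg (hι k) (abs_nonneg _)
    · exact le_rfl
  have hterm : c * ∑ k, ι k * v k
      ≤ ∑ k, (if 0 ≤ v k * (-1 : ℝ) ^ y then ι k * |v k| else 0) := by
    rw [Finset.mul_sum]
    apply Finset.sum_le_sum
    intro k _
    rcases hy with rfl | rfl
    · have hc0 : 0 ≤ c := by
        rw [hc]; push_cast; rw [sub_zero]; positivity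
      have hc1 : c ≤ 1 := by
        rw [hc]; push_cast
        rw [sub_zero, div_le_one hpos]; linarith
      simp only [pow_zero, mul_one]
      split_ifs with h
      · rw [abs_of_nonneg h]
        nlinarith [mul_nonneg (mul_nonneg (sub_nonneg.mpr hc1) (hι k)) h]
      · push_neg at h
        nlinarith [mul_nonneg (mul_nonneg hc0 (hι k)) (by linarith : (0:ℝ) ≤ -v k)]
    · have hc0 : -1 ≤ c := by
        rw [hc]; push_cast
        have : 0 ≤ Real.exp s / (1 + Real.exp s) := by positivity
        linarith
      have hc1 : c ≤ 0 := by
        rw [hc]; push_cast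
        have : Real.exp s / (1 + Real.exp s) ≤ 1 := by
          rw [div_le_one hpos]; linarith
        linarith
      simp only [pow_one, mul_neg_one] at *
      split_ifs with h
      · have hv : v k ≤ 0 := by linarith [neg_nonneg.mp h]
        rw [abs_of_nonpos hv]
        nlinarith [mul_nonneg (mul_nonneg (by linarith : (0:ℝ) ≤ c + 1) (hι k)) (by linarith : (0:ℝ) ≤ -v k)]
      · push_neg at h
        have hv : 0 < v k := by linarith
        nlinarith [mul_nonneg (mul_nonneg (by linarith : (0:ℝ) ≤ -c) (hι k)) hv.le]
  rw [hinner]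
  exact max_le hRHSnn hterm
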